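/- For every prime p ≥ 5 and every positive integer r, the sum ∑_{n=0}^{rp-1} C_n of Catalan numbers is congruent to β_r modulo p if p ≡ 1 (mod 3), and congruent to -γ_r modulo p if p ≡ 2 (mod 3), where β_r = ∑_{n=0}^{r-1} C_n and γ_r = ∑_{n=0}^{r-1} (3n+2)·C_n. -/

import Mathlib

open Finset

section CatalanAux

variable {p : ℕ} [Fact p.Prime]


/-- ℕ identity: `catalan n + C(2n, n+1) = C(2n, n)`. -/
lemma my_catalan_add_choose (n : ℕ) :
    catalan n + (2 * n).choose (n + 1) = (2 * n).choose n := by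
  have h1 : (n + 1) * catalan n = (2 * n).choose n :=
    succ_mul_catalan_eq_centralBinom n
  have h2 : (2 * n).choose (n + 1) * (n + 1) = (2 * n).choose n * n := by
    have := Nat.choose_succ_right_eq (2 * n) n
    simpa [two_mul, Nat.add_sub_cancel] using this
  have key : (n + 1) * (catalan n + (2 * n).choose (n + 1)) =
      (n + 1) * ((2 * n).choose n) := by
    calc (n + 1) * (catalan n + (2 * n).choose (n + 1))
        = (n + 1) * catalan n + (2 * n).choose (n + 1) * (n + 1) := by ring
      _ = (2 * n).choose n + (2 * n).choose n * n := by rw [h1, h2]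
      _ = (n + 1) * ((2 * n).choose n) := by ring
  exact Nat.eq_of_mul_eq_mul_left (Nat.succ_pos n) key

lemma my_catalan_cast (n : ℕ) :
    (catalan n : ZMod p) = ((2 * n).choose n : ZMod p) - ((2 * n).choose (n + 1) : ZMod p) := by
  have := congrArg (Nat.cast : ℕ → ZMod p) (my_catalan_add_choose n)
  push_cast at this
  linear_combination this

/-- Lucas. -/
lemma my_lucas (n k : ℕ) :
    ((n.choose k : ZMod p)) = ((n % p).choose (k % p) : ZMod p) * ((n / p).choose (k / p)) := by
  have := Choose.choose_modEq_choose_mod_mul_choose_div_nat (p := p) (n := n) (k := k)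
  have h := (ZMod.natCast_eq_natCast_iff _ _ _).mpr this
  push_cast at h
  exact h

lemma my_nz {a : ℕ} (h0 : 0 < a) (hlt : a < p) : (a : ZMod p) ≠ 0 := by
  rw [Ne, ZMod.natCast_eq_zero_iff]
  intro hdvd
  exact absurd (Nat.le_of_dvd h0 hdvd) (by omega)


lemma my_cb_eq (hp5 : 5 ≤ p) :
    ∀ t, t ≤ p / 2 → (Nat.centralBinom t : ZMod p) = (-4) ^ t * ((p / 2).choose t : ZMod p) := by
  have hodd : p % 2 = 1 := (Fact.out : p.Prime).eq_two_or_odd.resolve_left (by omega)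
  have h2m' : 2 * ((p / 2 : ℕ) : ZMod p) = -1 := by
    have hpe : 2 * (p / 2) + 1 = p := by omega
    have := congrArg (Nat.cast : ℕ → ZMod p) hpe
    push_cast at this
    rw [ZMod.natCast_self] at this
    linear_combination this
  intro t
  induction t with
  | zero => simp
  | succ t ih =>
    intro ht
    have ih' := ih (by omega)
    have ht1 : ((t : ZMod p) + 1) ≠ 0 := by
      have : (((t + 1 : ℕ)) : ZMod p) ≠ 0 := my_nz (by omega) (by omega)
      push_cast at this; exact this
    have hstep : ((t : ZMod p) + 1) * (Nat.centralBinom (t + 1) : ZMod p) =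
        2 * (2 * t + 1) * (Nat.centralBinom t : ZMod p) := by
      have := congrArg (Nat.cast : ℕ → ZMod p) (Nat.succ_mul_centralBinom_succ t)
      push_cast at this
      linear_combination this
    have hch : ((p / 2).choose (t + 1) : ZMod p) * ((t : ZMod p) + 1) =
        ((p / 2).choose t : ZMod p) * (((p / 2 : ℕ) : ZMod p) - (t : ZMod p)) := by
      have hn := Nat.choose_succ_right_eq (p / 2) t
      have := congrArg (Nat.cast : ℕ → ZMod p) hn
      rw [Nat.cast_mul, Nat.cast_mul, Nat.cast_sub (by omega : t ≤ p / 2)] at this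
      push_cast at this
      linear_combination this
    apply mul_left_cancel₀ ht1
    push_cast
    rw [hstep]
    linear_combination (2 * (2 * (t : ZMod p) + 1)) * ih' + (4 * (-4 : ZMod p) ^ t) * hch
      + (2 * (-4 : ZMod p) ^ t * ((p / 2).choose t : ZMod p)) * h2m'

lemma my_two_not_square : ¬IsSquare (2 : ZMod 3) := by decide

lemma my_term (hp5 : 5 ≤ p) (t : ℕ) (ht : t ≤ p / 2) :
    (-2) * (catalan t : ZMod p) = (-4) ^ (t + 1) * ((p / 2 + 1).choose (t + 1) : ZMod p) := by
  have hodd : p % 2 = 1 := (Fact.out : p.Prime).eq_two_or_odd.resolve_left (by omega)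
  have h2m' : 2 * ((p / 2 : ℕ) : ZMod p) = -1 := by
    have hpe : 2 * (p / 2) + 1 = p := by omega
    have := congrArg (Nat.cast : ℕ → ZMod p) hpe
    push_cast at this
    rw [ZMod.natCast_self] at this
    linear_combination this
  have ht1 : (2 * ((t : ZMod p) + 1)) ≠ 0 := by
    have h1 : (((2 : ℕ)) : ZMod p) ≠ 0 := my_nz (by omega) (by omega)
    have h2 : (((t + 1 : ℕ)) : ZMod p) ≠ 0 := my_nz (by omega) (by omega)
    push_cast at h1 h2
    exact mul_ne_zero h1 h2
  have hcat : ((t : ZMod p) + 1) * (catalan t : ZMod p) = (Nat.centralBinom t : ZMod p) := by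
    have := congrArg (Nat.cast : ℕ → ZMod p) (succ_mul_catalan_eq_centralBinom t)
    push_cast at this
    linear_combination this
  have hcb := my_cb_eq hp5 t ht
  have hsc : (((p / 2 : ℕ) : ZMod p) + 1) * ((p / 2).choose t : ZMod p) =
      ((p / 2 + 1).choose (t + 1) : ZMod p) * ((t : ZMod p) + 1) := by
    have := congrArg (Nat.cast : ℕ → ZMod p) (Nat.add_one_mul_choose_eq (p / 2) t)
    push_cast at this
    linear_combination this
  apply mul_left_cancel₀ ht1
  linear_combination (-4 : ZMod p) * hcat + (-4 : ZMod p) * hcb + (2 * (-4 : ZMod p) ^ (t + 1)) * hsc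
    + (-(-4 : ZMod p) ^ (t + 1) * ((p / 2).choose t : ZMod p)) * h2m'

lemma my_half (hp5 : 5 ≤ p) :
    (-2) * ∑ t ∈ range (p / 2 + 1), (catalan t : ZMod p) = (-3 : ZMod p) ^ (p / 2 + 1) - 1 := by
  rw [Finset.mul_sum]
  rw [Finset.sum_congr rfl fun t ht => my_term hp5 t (by simpa [Nat.lt_succ_iff] using ht)]
  have hb := add_pow (-4 : ZMod p) 1 (p / 2 + 1)
  simp only [one_pow, mul_one] at hb
  rw [Finset.sum_range_succ'] at hb
  norm_num at hb
  linear_combination -hb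

lemma my_neg_three_pow_one (hp5 : 5 ≤ p) (h3 : p % 3 = 1) :
    (-3 : ZMod p) ^ (p / 2) = 1 := by
  have h2 : p ≠ 2 := by omega
  haveI : Fact (Nat.Prime 3) := ⟨by norm_num⟩
  have hodd : p % 2 = 1 := (Fact.out : p.Prime).eq_two_or_odd.resolve_left (by omega)
  have hpow := legendreSym.eq_pow p (-3)
  have hrec := legendreSym.quadratic_reciprocity' (p := 3) (q := p) (by norm_num) h2
  have hmul : legendreSym p (-3) = legendreSym p (-1) * legendreSym p 3 := by
    rw [← legendreSym.mul]; norm_num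
  have hneg : legendreSym p (-1) = (-1) ^ (p / 2) := by
    rw [legendreSym.at_neg_one h2, ZMod.χ₄_eq_neg_one_pow hodd]
  norm_num at hrec
  have hval : legendreSym 3 p = 1 := by
    have hcast : ((p : ℕ) : ZMod 3) = 1 := by
      rw [← ZMod.natCast_mod, h3]; norm_num
    rw [legendreSym.eq_one_iff' (p := 3) (by rw [hcast]; exact one_ne_zero)]
    rw [hcast]; exact IsSquare.one
  have hsq : ((-1 : ℤ) ^ (p / 2)) * ((-1 : ℤ) ^ (p / 2)) = 1 := by
    rw [← pow_add]; exact Even.neg_one_pow ⟨p / 2, rfl⟩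
  have : legendreSym p (-3) = 1 := by
    rw [hmul, hneg, hrec, hval]
    norm_num
    linear_combination hsq
  rw [this] at hpow
  push_cast at hpow
  linear_combination -hpow

lemma my_neg_three_pow_two (hp5 : 5 ≤ p) (h3 : p % 3 = 2) :
    (-3 : ZMod p) ^ (p / 2) = -1 := by
  have h2 : p ≠ 2 := by omega
  haveI : Fact (Nat.Prime 3) := ⟨by norm_num⟩
  have hodd : p % 2 = 1 := (Fact.out : p.Prime).eq_two_or_odd.resolve_left (by omega)
  have hpow := legendreSym.eq_pow p (-3)
  have hrec := legendreSym.quadratic_reciprocity' (p := 3) (q := p) (by norm_num) h2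
  have hmul : legendreSym p (-3) = legendreSym p (-1) * legendreSym p 3 := by
    rw [← legendreSym.mul]; norm_num
  have hneg : legendreSym p (-1) = (-1) ^ (p / 2) := by
    rw [legendreSym.at_neg_one h2, ZMod.χ₄_eq_neg_one_pow hodd]
  norm_num at hrec
  have hval : legendreSym 3 p = -1 := by
    have hcast : ((p : ℕ) : ZMod 3) = 2 := by
      rw [← ZMod.natCast_mod, h3]; norm_num
    rw [legendreSym.eq_neg_one_iff' (p := 3) (a := p), hcast]
    exact my_two_not_square
  have hsq : ((-1 : ℤ) ^ (p / 2)) * ((-1 : ℤ) ^ (p / 2)) = 1 := by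
    rw [← pow_add]; exact Even.neg_one_pow ⟨p / 2, rfl⟩
  have : legendreSym p (-3) = -1 := by
    rw [hmul, hneg, hrec, hval, ← mul_assoc, hsq]
    norm_num
  rw [this] at hpow
  push_cast at hpow
  linear_combination -hpow

lemma my_md_mod {a b : ℕ} (hb : b < p) : (a * p + b) % p = b := by
  rw [mul_comm a p, Nat.mul_add_mod, Nat.mod_eq_of_lt hb]

lemma my_md_div {a b : ℕ} (hb : b < p) : (a * p + b) / p = a := by
  have hp0 : 0 < p := (Fact.out : p.Prime).pos
  rw [mul_comm, Nat.mul_add_div hp0, Nat.div_eq_of_lt hb, add_zero]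

lemma my_B1 (hp5 : 5 ≤ p) (j t : ℕ) (ht : t ≤ p / 2) :
    (catalan (j * p + t) : ZMod p) = ((2 * j).choose j : ZMod p) * (catalan t : ZMod p) := by
  have hodd : p % 2 = 1 := (Fact.out : p.Prime).eq_two_or_odd.resolve_left (by omega)
  have h2t : 2 * t < p := by omega
  have htp : t < p := by omega
  have ht1 : t + 1 < p := by omega
  have h1 : 2 * (j * p + t) = 2 * j * p + 2 * t := by ring
  have h2 : j * p + t + 1 = j * p + (t + 1) := by ring
  rw [my_catalan_cast, h1, h2, my_lucas (2 * j * p + 2 * t) (j * p + t),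
    my_lucas (2 * j * p + 2 * t) (j * p + (t + 1)),
    my_md_mod h2t, my_md_div h2t, my_md_mod htp, my_md_div htp,
    my_md_mod ht1, my_md_div ht1, my_catalan_cast t]
  ring

lemma my_B2 (hp5 : 5 ≤ p) (j t : ℕ) (hm : p / 2 < t) (ht : t < p - 1) :
    (catalan (j * p + t) : ZMod p) = 0 := by
  have hodd : p % 2 = 1 := (Fact.out : p.Prime).eq_two_or_odd.resolve_left (by omega)
  have hs1 : 2 * t = p + (2 * t - p) := by omega
  have hsp : 2 * t - p < p := by omega
  have htp : t < p := by omega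
  have ht1 : t + 1 < p := by omega
  have h1 : 2 * (j * p + t) = (2 * j + 1) * p + (2 * t - p) := by
    calc 2 * (j * p + t) = 2 * j * p + 2 * t := by ring
      _ = 2 * j * p + (p + (2 * t - p)) := by rw [← hs1]
      _ = (2 * j + 1) * p + (2 * t - p) := by ring
  have h2 : j * p + t + 1 = j * p + (t + 1) := by ring
  have hz1 : (2 * t - p).choose t = 0 := Nat.choose_eq_zero_of_lt (by omega)
  have hz2 : (2 * t - p).choose (t + 1) = 0 := Nat.choose_eq_zero_of_lt (by omega)
  rw [my_catalan_cast, h1, h2, my_lucas ((2 * j + 1) * p + (2 * t - p)) (j * p + t),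
    my_lucas ((2 * j + 1) * p + (2 * t - p)) (j * p + (t + 1)),
    my_md_mod hsp, my_md_mod htp, my_md_mod ht1, hz1, hz2]
  simp

lemma my_B3 (hp5 : 5 ≤ p) (j : ℕ) :
    (catalan (j * p + (p - 1)) : ZMod p) =
      (catalan j : ZMod p) - 2 * ((2 * j).choose j : ZMod p) := by
  have hodd : p % 2 = 1 := (Fact.out : p.Prime).eq_two_or_odd.resolve_left (by omega)
  have hsp : p - 2 < p := by omega
  have htp : p - 1 < p := by omega
  have h1 : 2 * (j * p + (p - 1)) = (2 * j + 1) * p + (p - 2) := by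
    have h2 : 2 * (p - 1) = p + (p - 2) := by omega
    calc 2 * (j * p + (p - 1)) = 2 * j * p + 2 * (p - 1) := by ring
      _ = 2 * j * p + (p + (p - 2)) := by rw [h2]
      _ = (2 * j + 1) * p + (p - 2) := by ring
  have hn1 : j * p + (p - 1) + 1 = (j + 1) * p := by
    have h3 : p - 1 + 1 = p := by omega
    calc j * p + (p - 1) + 1 = j * p + (p - 1 + 1) := by ring
      _ = j * p + p := by rw [h3]
      _ = (j + 1) * p := by ring
  have hz1 : (p - 2).choose (p - 1) = 0 := Nat.choose_eq_zero_of_lt (by omega)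
  have hmod0 : ((j + 1) * p) % p = 0 := Nat.mul_mod_left _ _
  have hdiv0 : ((j + 1) * p) / p = j + 1 :=
    Nat.mul_div_cancel (j + 1) (Fact.out : p.Prime).pos
  have hpascal : (2 * j + 1).choose (j + 1) = (2 * j).choose j + (2 * j).choose (j + 1) :=
    Nat.choose_succ_succ (2 * j) j
  have hcc : ((2 * j).choose (j + 1) : ZMod p) =
      ((2 * j).choose j : ZMod p) - (catalan j : ZMod p) := by
    have := congrArg (Nat.cast : ℕ → ZMod p) (my_catalan_add_choose j)
    push_cast at this
    linear_combination this
  rw [my_catalan_cast, h1, hn1, my_lucas ((2 * j + 1) * p + (p - 2)) (j * p + (p - 1)),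
    my_lucas ((2 * j + 1) * p + (p - 2)) ((j + 1) * p),
    my_md_mod hsp, my_md_mod htp, my_md_div htp, my_md_div hsp, hmod0, hdiv0, hz1, Nat.choose_zero_right, hpascal]
  push_cast [hcc]
  ring

lemma my_block (hp5 : 5 ≤ p) (j : ℕ) :
    ∑ t ∈ range p, (catalan (j * p + t) : ZMod p) =
      (∑ t ∈ range (p / 2 + 1), (catalan t : ZMod p)) * ((2 * j).choose j : ZMod p)
        + ((catalan j : ZMod p) - 2 * ((2 * j).choose j : ZMod p)) := by
  have hodd : p % 2 = 1 := (Fact.out : p.Prime).eq_two_or_odd.resolve_left (by omega)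
  have hm2 : 2 ≤ p / 2 := by omega
  have hsplit : p = (p / 2 + 1) + (p / 2) := by omega
  have hsum := Finset.sum_range_add (fun t => (catalan (j * p + t) : ZMod p)) (p / 2 + 1) (p / 2)
  rw [← hsplit] at hsum
  rw [hsum]
  have e1 : ∑ t ∈ range (p / 2 + 1), (catalan (j * p + t) : ZMod p) =
      (∑ t ∈ range (p / 2 + 1), (catalan t : ZMod p)) * ((2 * j).choose j : ZMod p) := by
    rw [Finset.sum_mul]
    refine Finset.sum_congr rfl fun t ht => ?_
    rw [my_B1 hp5 j t (by simpa [Nat.lt_succ_iff] using ht)]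
    ring
  have e2 : ∑ i ∈ range (p / 2), (catalan (j * p + (p / 2 + 1 + i)) : ZMod p) =
      (catalan j : ZMod p) - 2 * ((2 * j).choose j : ZMod p) := by
    have ecg : ∀ i ∈ range (p / 2), (catalan (j * p + (p / 2 + 1 + i)) : ZMod p) =
        (if i = p / 2 - 1 then (catalan j : ZMod p) - 2 * ((2 * j).choose j : ZMod p) else 0) := by
      intro i hi
      rw [Finset.mem_range] at hi
      by_cases hi' : i = p / 2 - 1
      · rw [if_pos hi']
        have harg : p / 2 + 1 + i = p - 1 := by omega
        rw [harg]
        exact my_B3 hp5 j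
      · rw [if_neg hi']
        exact my_B2 hp5 j _ (by omega) (by omega)
    rw [Finset.sum_congr rfl ecg, Finset.sum_ite_eq' (range (p / 2)) (p / 2 - 1)]
    rw [if_pos (Finset.mem_range.mpr (by omega))]
  rw [e1, e2]

lemma my_total (r : ℕ) :
    ∑ n ∈ range (r * p), (catalan n : ZMod p) =
      ∑ j ∈ range r, ∑ t ∈ range p, (catalan (j * p + t) : ZMod p) := by
  induction r with
  | zero => simp
  | succ r ih =>
    have h : (r + 1) * p = r * p + p := by ring
    rw [h, Finset.sum_range_add, ih, Finset.sum_range_succ]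

end CatalanAux

theorem sum_catalan_rp_mod_p (p : ℕ) (hp : p.Prime) (hp5 : 5 ≤ p)
    (r : ℕ) (hr : 0 < r) :
    (p % 3 = 1 → (∑ n ∈ Finset.range (r * p), (catalan n : ZMod p)) =
      ∑ n ∈ Finset.range r, (catalan n : ZMod p)) ∧
    (p % 3 = 2 → (∑ n ∈ Finset.range (r * p), (catalan n : ZMod p)) =
      -∑ n ∈ Finset.range r, ((3 * n + 2 : ℕ) * catalan n : ZMod p)) := by
  haveI : Fact p.Prime := ⟨hp⟩
  have h2ne : (-2 : ZMod p) ≠ 0 := by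
    have h1 : (((2 : ℕ)) : ZMod p) ≠ 0 := my_nz (by omega) (by omega)
    push_cast at h1
    exact neg_ne_zero.mpr h1
  have hh := my_half (p := p) hp5
  constructor
  · intro h3
    have hq := my_neg_three_pow_one (p := p) hp5 h3
    rw [pow_succ, hq, one_mul] at hh
    have hS : ∑ t ∈ range (p / 2 + 1), (catalan t : ZMod p) = 2 := by
      apply mul_left_cancel₀ h2ne
      rw [hh]; norm_num
    rw [my_total r]
    refine Finset.sum_congr rfl fun j _ => ?_
    rw [my_block hp5 j, hS]
    ring
  · intro h3
    have hq := my_neg_three_pow_two (p := p) hp5 h3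
    rw [pow_succ, hq] at hh
    have hS : ∑ t ∈ range (p / 2 + 1), (catalan t : ZMod p) = -1 := by
      apply mul_left_cancel₀ h2ne
      rw [hh]; norm_num
    rw [my_total r, ← Finset.sum_neg_distrib]
    refine Finset.sum_congr rfl fun j _ => ?_
    rw [my_block hp5 j, hS]
    have hcat : ((j : ZMod p) + 1) * (catalan j : ZMod p) = ((2 * j).choose j : ZMod p) := by
      have := congrArg (Nat.cast : ℕ → ZMod p) (succ_mul_catalan_eq_centralBinom j)
      rw [Nat.centralBinom_eq_two_mul_choose] at this
      push_cast at this
      linear_combination this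
    push_cast
    linear_combination (3 : ZMod p) * hcat
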